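/- For every integer n ≥ 2 and every subset T of {2,…,n−1} containing no two consecutive integers, Σ_{w ∈ W_n, Dot(w) ⊇ T} t^{cro(w)} = t^{|T|} (1+t)^{n−1−2|T|} in ℤ[t]. -/

import Mathlib

open Polynomial Finset

/-- `[m]_t = 1 + t + ⋯ + t^(m-1)`, with `[0]_t = 0`. -/
noncomputable def qnum (m : ℕ) : Polynomial ℤ := ∑ i ∈ Finset.range m, X ^ i

/-- Given the previous value `prev` and a (sorted) list `s₁, …, s_ℓ`, the product
`[s₁ - prev - 1]_t · [s₂ - s₁ - 1]_t ⋯ [s_ℓ - s_{ℓ-1} - 1]_t`. -/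
noncomputable def gapProd : ℕ → List ℕ → Polynomial ℤ
  | _, [] => 1
  | prev, s :: rest => qnum (s - prev - 1) * gapProd s rest

/-- `S` contains no two consecutive integers. -/
def NoTwoConsec (S : Finset ℕ) : Prop := ∀ i ∈ S, i + 1 ∉ S

instance (S : Finset ℕ) : Decidable (NoTwoConsec S) :=
  inferInstanceAs (Decidable (∀ i ∈ S, i + 1 ∉ S))

/-- The three symbols `•` (dot), `×` (cross), `␣` (blank). -/
inductive Mark : Type where
  | dot : Mark
  | cross : Mark
  | blank : Mark
  deriving DecidableEq

instance : Fintype Mark :=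
  ⟨{Mark.dot, Mark.cross, Mark.blank}, fun x => by cases x <;> simp⟩

/-- The letter `w_i` (positions numbered `1, …, m`) of a sequence encoded as a
function `Fin m → Mark`; out-of-range positions read as blank. -/
def letterAt {m : ℕ} (w : Fin m → Mark) (i : ℕ) : Mark :=
  if h : 1 ≤ i ∧ i ≤ m then w ⟨i - 1, by omega⟩ else Mark.blank

/-- Membership in `W_n`: `w = w₁ … w_{n-1}` satisfies
(i) if `w_i = •` then `i ≥ 2` and `w_{i-1} = ×`;
(ii) a cross in position `j ≤ n-2` is immediately followed by a cross or a dot. -/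
def IsW (n : ℕ) (w : Fin (n - 1) → Mark) : Prop :=
  (∀ i, letterAt w i = Mark.dot → 2 ≤ i ∧ letterAt w (i - 1) = Mark.cross) ∧
  (∀ j, j ≤ n - 2 → letterAt w j = Mark.cross →
    letterAt w (j + 1) = Mark.cross ∨ letterAt w (j + 1) = Mark.dot)

/-- `Dot(w)`, the set of positions carrying a dot. -/
def DotSet (n : ℕ) (w : Fin (n - 1) → Mark) : Finset ℕ :=
  (Finset.Icc 1 (n - 1)).filter fun i => letterAt w i = Mark.dot

/-- `cro(w)`, the number of crosses. -/
def cro (n : ℕ) (w : Fin (n - 1) → Mark) : ℕ :=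
  ((Finset.Icc 1 (n - 1)).filter fun i => letterAt w i = Mark.cross).card

/- ================== auxiliary development ================== -/

lemma letterAt_in_range {m : ℕ} (w : Fin m → Mark) (i : ℕ)
    (h : letterAt w i ≠ Mark.blank) : 1 ≤ i ∧ i ≤ m := by
  by_contra hc
  simp [letterAt, hc] at h

lemma letterAt_cons_one {m : ℕ} (a : Mark) (v : Fin m → Mark) :
    letterAt (Fin.cons a v) 1 = a := by
  rw [letterAt, dif_pos ⟨le_refl 1, by omega⟩]
  have h0 : (⟨1 - 1, by omega⟩ : Fin (m + 1)) = 0 := rfl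
  rw [h0, Fin.cons_zero]

lemma letterAt_cons_succ {m : ℕ} (a : Mark) (v : Fin m → Mark) (i : ℕ) (hi : 1 ≤ i) :
    letterAt (Fin.cons a v) (i + 1) = letterAt v i := by
  unfold letterAt
  by_cases h : i ≤ m
  · rw [dif_pos ⟨by omega, by omega⟩, dif_pos ⟨hi, h⟩]
    have : (⟨i + 1 - 1, by omega⟩ : Fin (m + 1)) = Fin.succ ⟨i - 1, by omega⟩ := by
      apply Fin.ext; simp; omega
    rw [this, Fin.cons_succ]
  · rw [dif_neg (by omega), dif_neg (by omega)]

def dots (m : ℕ) (w : Fin m → Mark) : Finset ℕ :=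
  (Finset.Icc 1 m).filter fun i => letterAt w i = Mark.dot

def cros (m : ℕ) (w : Fin m → Mark) : ℕ :=
  ∑ i ∈ Finset.range m, if letterAt w (i + 1) = Mark.cross then 1 else 0

def Good (b : Bool) (m : ℕ) (w : Fin m → Mark) : Prop :=
  (∀ i, letterAt w i = Mark.dot →
      (2 ≤ i ∧ letterAt w (i - 1) = Mark.cross) ∨ (i = 1 ∧ b = true)) ∧
  (b = true → 1 ≤ m → letterAt w 1 ≠ Mark.blank) ∧
  (∀ j, 1 ≤ j → j + 1 ≤ m → letterAt w j = Mark.cross →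
      letterAt w (j + 1) = Mark.cross ∨ letterAt w (j + 1) = Mark.dot)

open scoped Classical in
noncomputable def Ssum (b : Bool) (m : ℕ) (T : Finset ℕ) : Polynomial ℤ :=
  ∑ w ∈ Finset.univ.filter (fun w : Fin m → Mark => Good b m w ∧ T ⊆ dots m w),
    (X : Polynomial ℤ) ^ cros m w

def shiftT (T : Finset ℕ) : Finset ℕ := (T.erase 1).image (· - 1)

lemma mem_shiftT {T : Finset ℕ} (hT : ∀ y ∈ T, 1 ≤ y) (x : ℕ) :
    x ∈ shiftT T ↔ 1 ≤ x ∧ x + 1 ∈ T := by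
  simp only [shiftT, mem_image, mem_erase]
  constructor
  · rintro ⟨y, ⟨hy1, hy2⟩, rfl⟩
    have h1 := hT y hy2
    have h2 : y - 1 + 1 = y := by omega
    refine ⟨by omega, by rwa [h2]⟩
  · rintro ⟨hx, h⟩
    exact ⟨x + 1, ⟨by omega, h⟩, by omega⟩

lemma card_shiftT {T : Finset ℕ} (hT : ∀ y ∈ T, 1 ≤ y) :
    (shiftT T).card = (T.erase 1).card := by
  apply Finset.card_image_of_injOn
  intro x hx y hy hxy
  simp only [Finset.coe_erase, Set.mem_diff, Finset.mem_coe, Set.mem_singleton_iff] at hx hy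
  have h1 := hT x hx.1; have h2 := hT y hy.1
  have h3 := hx.2; have h4 := hy.2
  have hxy' : x - 1 = y - 1 := hxy
  omega

lemma noTwoConsec_shiftT {T : Finset ℕ} (hT : ∀ y ∈ T, 1 ≤ y) (h : NoTwoConsec T) :
    NoTwoConsec (shiftT T) := by
  intro i hi hi1
  rw [mem_shiftT hT] at hi hi1
  exact h (i + 1) hi.2 hi1.2

lemma stable_card_bound {T : Finset ℕ} {a b : ℕ} (h1 : T ⊆ Finset.Icc a b)
    (h2 : NoTwoConsec T) : 2 * T.card ≤ b + 2 - a := by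
  have hdisj : Disjoint T (T.image (· + 1)) := by
    rw [Finset.disjoint_left]
    intro x hx hx'
    simp only [mem_image] at hx'
    obtain ⟨y, hy, rfl⟩ := hx'
    exact h2 y hy hx
  have hsub : T ∪ T.image (· + 1) ⊆ Finset.Icc a (b + 1) := by
    intro x hx
    rcases Finset.mem_union.1 hx with h | h
    · have := h1 h; simp only [mem_Icc] at this ⊢; omega
    · simp only [mem_image] at h
      obtain ⟨y, hy, rfl⟩ := h
      have := h1 hy; simp only [mem_Icc] at this ⊢; omega
  have hcard := Finset.card_le_card hsub
  rw [Finset.card_union_of_disjoint hdisj,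
    Finset.card_image_of_injective _ (add_left_injective 1)] at hcard
  have := Nat.card_Icc a (b + 1)
  omega

lemma sum_mark {M : Type*} [AddCommMonoid M] (f : Mark → M) :
    ∑ a : Mark, f a = f Mark.dot + f Mark.cross + f Mark.blank := by
  have : (Finset.univ : Finset Mark) = {Mark.dot, Mark.cross, Mark.blank} := by decide
  rw [this]
  simp [Finset.sum_insert, Finset.mem_insert, add_assoc]

lemma sum_cons_split {M : Type*} [AddCommMonoid M] {m : ℕ}
    (f : (Fin (m + 1) → Mark) → M) :
    ∑ w : Fin (m + 1) → Mark, f w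
      = ∑ a : Mark, ∑ v : Fin m → Mark, f (Fin.cons a v) := by
  rw [← Equiv.sum_comp (Fin.consEquiv (fun _ => Mark)) f, Fintype.sum_prod_type]
  rfl

lemma letterAt_zero {m : ℕ} (w : Fin m → Mark) : letterAt w 0 = Mark.blank := by
  rw [letterAt, dif_neg]; omega

lemma letterAt_cons {m : ℕ} (a : Mark) (v : Fin m → Mark) (i : ℕ) :
    letterAt (Fin.cons a v) i = if i = 1 then a else letterAt v (i - 1) := by
  match i with
  | 0 => simp [letterAt_zero]
  | 1 => simp [letterAt_cons_one]
  | (k + 2) =>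
    rw [if_neg (by omega)]
    have := letterAt_cons_succ a v (k + 1) (by omega)
    simpa using this

lemma cros_cons {m : ℕ} (a : Mark) (v : Fin m → Mark) :
    cros (m + 1) (Fin.cons a v) = (if a = Mark.cross then 1 else 0) + cros m v := by
  rw [cros, Finset.sum_range_succ']
  rw [cros, add_comm]
  congr 1
  · apply Finset.sum_congr rfl
    intro i _
    rw [letterAt_cons, if_neg (show ¬(i + 1 + 1 = 1) by omega)]
    norm_num

lemma mem_dots {m : ℕ} (v : Fin m → Mark) (i : ℕ) :
    i ∈ dots m v ↔ letterAt v i = Mark.dot := by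
  constructor
  · intro h; exact (Finset.mem_filter.1 h).2
  · intro h
    have hr := letterAt_in_range v i (by rw [h]; simp)
    exact Finset.mem_filter.2 ⟨Finset.mem_Icc.2 hr, h⟩

lemma mem_dots_cons {m : ℕ} (a : Mark) (v : Fin m → Mark) (i : ℕ) :
    i ∈ dots (m + 1) (Fin.cons a v) ↔ (i = 1 ∧ a = Mark.dot) ∨ (2 ≤ i ∧ i - 1 ∈ dots m v) := by
  rw [mem_dots, letterAt_cons]
  by_cases h1 : i = 1
  · subst h1; simp
  · rw [if_neg h1, mem_dots]
    constructor
    · intro h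
      have hr := letterAt_in_range v (i - 1) (by rw [h]; simp)
      exact Or.inr ⟨by omega, h⟩
    · rintro (⟨h, _⟩ | ⟨_, h⟩)
      · exact absurd h h1
      · exact h

lemma subset_dots_cons {m : ℕ} (a : Mark) (v : Fin m → Mark) {T : Finset ℕ}
    (hT : T ⊆ Finset.Icc 1 (m + 1)) :
    T ⊆ dots (m + 1) (Fin.cons a v) ↔ (1 ∈ T → a = Mark.dot) ∧ shiftT T ⊆ dots m v := by
  have hT1 : ∀ y ∈ T, 1 ≤ y := fun y hy => (Finset.mem_Icc.1 (hT hy)).1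
  constructor
  · intro h
    refine ⟨fun h1 => ?_, fun x hx => ?_⟩
    · have := (mem_dots_cons a v 1).1 (h h1)
      rcases this with ⟨_, ha⟩ | ⟨h2, _⟩
      · exact ha
      · omega
    · rw [mem_shiftT hT1] at hx
      have := (mem_dots_cons a v (x + 1)).1 (h hx.2)
      rcases this with ⟨h1, _⟩ | ⟨_, hd⟩
      · omega
      · simpa using hd
  · rintro ⟨h1, h2⟩ y hy
    rw [mem_dots_cons]
    by_cases hy1 : y = 1
    · exact Or.inl ⟨hy1, h1 (hy1 ▸ hy)⟩
    · have hyge : 2 ≤ y := by have := hT1 y hy; omega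
      refine Or.inr ⟨hyge, h2 ?_⟩
      rw [mem_shiftT hT1]
      constructor
      · omega
      · have : y - 1 + 1 = y := by omega
        rwa [this]

lemma mark_ne_blank (a : Mark) (h : a ≠ Mark.blank) :
    a = Mark.cross ∨ a = Mark.dot := by
  cases a <;> simp_all

lemma good_cons {m : ℕ} {b : Bool} (a : Mark) (v : Fin m → Mark) :
    Good b (m + 1) (Fin.cons a v) ↔
      (a = Mark.dot → b = true) ∧ (b = true → a ≠ Mark.blank) ∧
        Good (if a = Mark.cross then true else false) m v := by
  constructor
  · rintro ⟨h1, h2, h3⟩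
    have hR1 : a = Mark.dot → b = true := by
      intro ha
      have := h1 1 (by rw [letterAt_cons, if_pos rfl]; exact ha)
      rcases this with ⟨h, _⟩ | ⟨_, hb⟩
      · omega
      · exact hb
    refine ⟨hR1, ?_, ?_, ?_, ?_⟩
    · intro hb
      have := h2 hb (by omega)
      rwa [letterAt_cons, if_pos rfl] at this
    · -- dot condition for v
      intro i hdot
      have hr := letterAt_in_range v i (by rw [hdot]; simp)
      have := h1 (i + 1) (by rw [letterAt_cons, if_neg (by omega)]; simpa using hdot)
      rcases this with ⟨_, hc⟩ | ⟨he, _⟩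
      · rw [letterAt_cons] at hc
        simp only [Nat.add_sub_cancel] at hc
        by_cases hi1 : i = 1
        · rw [if_pos hi1] at hc
          refine Or.inr ⟨hi1, by rw [if_pos hc]⟩
        · rw [if_neg hi1] at hc
          exact Or.inl ⟨by omega, hc⟩
      · omega
    · -- nonblank condition for v
      intro hb' hm
      have ha : a = Mark.cross := by
        by_contra hco; rw [if_neg hco] at hb'; exact absurd hb' (by simp)
      have := h3 1 (by omega) (by omega) (by rw [letterAt_cons, if_pos rfl]; exact ha)
      rw [letterAt_cons, if_neg (by omega)] at this
      simp only [Nat.add_sub_cancel] at this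
      rcases this with h | h <;> rw [h] <;> simp
    · -- cross condition for v
      intro j hj1 hjm hcross
      have := h3 (j + 1) (by omega) (by omega)
        (by rw [letterAt_cons, if_neg (by omega)]; simpa using hcross)
      rw [letterAt_cons, if_neg (by omega)] at this
      simpa using this
  · rintro ⟨hR1, hR2, g1, g2, g3⟩
    refine ⟨?_, ?_, ?_⟩
    · intro i hdot
      have hr := letterAt_in_range (Fin.cons a v) i (by rw [hdot]; simp)
      by_cases hi1 : i = 1
      · subst hi1
        rw [letterAt_cons, if_pos rfl] at hdot
        exact Or.inr ⟨rfl, hR1 hdot⟩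
      · rw [letterAt_cons, if_neg hi1] at hdot
        have := g1 (i - 1) hdot
        rcases this with ⟨hge, hc⟩ | ⟨he, hb'⟩
        · refine Or.inl ⟨by omega, ?_⟩
          rw [letterAt_cons, if_neg (by omega)]
          exact hc
        · have ha : a = Mark.cross := by
            by_contra hco; rw [if_neg hco] at hb'; exact absurd hb' (by simp)
          refine Or.inl ⟨by omega, ?_⟩
          rw [letterAt_cons, if_pos (by omega)]
          exact ha
    · intro hb _
      rw [letterAt_cons, if_pos rfl]
      exact hR2 hb
    · intro j hj1 hjm hcross
      by_cases hj : j = 1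
      · subst hj
        rw [letterAt_cons, if_pos rfl] at hcross
        have hb' := hcross
        have hL1 : letterAt v 1 ≠ Mark.blank := g2 (by rw [if_pos hb']) (by omega)
        rw [letterAt_cons, if_neg (by omega)]
        simp only [Nat.add_sub_cancel]
        exact mark_ne_blank _ hL1
      · rw [letterAt_cons, if_neg hj] at hcross
        have := g3 (j - 1) (by omega) (by omega) hcross
        rw [letterAt_cons, if_neg (by omega)]
        simp only [Nat.add_sub_cancel]
        convert this using 3 <;> omega

lemma noTwoConsec_erase {T : Finset ℕ} (h : NoTwoConsec T) (a : ℕ) :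
    NoTwoConsec (T.erase a) := fun i hi hi1 =>
  h i (Finset.mem_of_mem_erase hi) (Finset.mem_of_mem_erase hi1)

open scoped Classical in
lemma Ssum_eq (m : ℕ) : ∀ (b : Bool) (T : Finset ℕ),
    T ⊆ Finset.Icc (if b then 1 else 2) m → NoTwoConsec T →
    Ssum b m T = if 1 ∈ T then X ^ (T.card - 1) * (1 + X) ^ (m + 1 - 2 * T.card)
      else X ^ T.card * (1 + X) ^ (m - 2 * T.card) := by
  induction m with
  | zero =>
    intro b T hT1 hT2
    have hTe : T = ∅ := by
      rw [Finset.eq_empty_iff_forall_notMem]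
      intro x hx
      have h := Finset.mem_Icc.1 (hT1 hx)
      cases b <;> simp at h <;> omega
    subst hTe
    have hGood : ∀ w : Fin 0 → Mark, Good b 0 w := by
      intro w
      refine ⟨?_, ?_, ?_⟩
      · intro i hi
        have := letterAt_in_range w i (by rw [hi]; simp)
        omega
      · intro _ h; omega
      · intro j h1 h2; omega
    have hcros : ∀ w : Fin 0 → Mark, cros 0 w = 0 := by intro w; simp [cros]
    simp only [Ssum, Finset.notMem_empty, if_false]
    rw [Finset.filter_true_of_mem (fun w _ => ⟨hGood w, Finset.empty_subset _⟩)]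
    simp [hcros, Finset.card_empty]
  | succ m ih =>
    intro b T hT1 hT2
    have hTel : ∀ y ∈ T, 1 ≤ y ∧ y ≤ m + 1 := by
      intro y hy
      have h := Finset.mem_Icc.1 (hT1 hy)
      cases b <;> simp at h <;> omega
    have hTel1 : ∀ y ∈ T, 1 ≤ y := fun y hy => (hTel y hy).1
    have hT1' : T ⊆ Finset.Icc 1 (m + 1) := by
      intro y hy; rw [Finset.mem_Icc]; exact hTel y hy
    have hstab' : NoTwoConsec (shiftT T) := noTwoConsec_shiftT hTel1 hT2
    have hsub1 : shiftT T ⊆ Finset.Icc (if true then 1 else 2) m := by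
      intro x hx
      rw [mem_shiftT hTel1] at hx
      have := hTel _ hx.2
      rw [Finset.mem_Icc]
      constructor
      · simp; omega
      · omega
    have h1shift : (1 ∈ shiftT T) ↔ 2 ∈ T := by
      rw [mem_shiftT hTel1]; simp
    -- the three per-letter sums
    have hdot : (∑ v : Fin m → Mark,
          if Good b (m + 1) (Fin.cons Mark.dot v) ∧ T ⊆ dots (m + 1) (Fin.cons Mark.dot v)
          then (X : Polynomial ℤ) ^ cros (m + 1) (Fin.cons Mark.dot v) else 0)
        = if b = true then Ssum false m (shiftT T) else 0 := by
      by_cases hb : b = true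
      · rw [if_pos hb, Ssum, Finset.sum_filter]
        apply Finset.sum_congr rfl
        intro v _
        have hc : cros (m + 1) (Fin.cons Mark.dot v) = cros m v := by
          rw [cros_cons]; simp
        rw [hc]
        apply if_congr _ rfl rfl
        rw [good_cons, subset_dots_cons Mark.dot v hT1']
        simp [hb]
      · rw [if_neg hb]
        apply Finset.sum_eq_zero
        intro v _
        rw [if_neg]
        rintro ⟨hg, _⟩
        rw [good_cons] at hg
        exact hb (hg.1 rfl)
    have hcross : (∑ v : Fin m → Mark,
          if Good b (m + 1) (Fin.cons Mark.cross v) ∧ T ⊆ dots (m + 1) (Fin.cons Mark.cross v)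
          then (X : Polynomial ℤ) ^ cros (m + 1) (Fin.cons Mark.cross v) else 0)
        = if 1 ∈ T then 0 else X * Ssum true m (shiftT T) := by
      by_cases h1 : 1 ∈ T
      · rw [if_pos h1]
        apply Finset.sum_eq_zero
        intro v _
        rw [if_neg]
        rintro ⟨_, hs⟩
        rw [subset_dots_cons Mark.cross v hT1'] at hs
        exact absurd (hs.1 h1) (by simp)
      · rw [if_neg h1, Ssum, Finset.sum_filter, Finset.mul_sum]
        apply Finset.sum_congr rfl
        intro v _
        rw [mul_ite, mul_zero]
        have hc : cros (m + 1) (Fin.cons Mark.cross v) = 1 + cros m v := by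
          rw [cros_cons]; simp
        have hiff : (Good b (m + 1) (Fin.cons Mark.cross v) ∧
            T ⊆ dots (m + 1) (Fin.cons Mark.cross v)) ↔
            (Good true m v ∧ shiftT T ⊆ dots m v) := by
          rw [good_cons, subset_dots_cons Mark.cross v hT1']
          simp [h1]
        rw [hc]
        apply if_congr hiff _ rfl
        rw [pow_add, pow_one]
    have hblank : (∑ v : Fin m → Mark,
          if Good b (m + 1) (Fin.cons Mark.blank v) ∧ T ⊆ dots (m + 1) (Fin.cons Mark.blank v)
          then (X : Polynomial ℤ) ^ cros (m + 1) (Fin.cons Mark.blank v) else 0)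
        = if b = false ∧ 1 ∉ T then Ssum false m (shiftT T) else 0 := by
      by_cases hcond : b = false ∧ 1 ∉ T
      · rw [if_pos hcond, Ssum, Finset.sum_filter]
        apply Finset.sum_congr rfl
        intro v _
        have hc : cros (m + 1) (Fin.cons Mark.blank v) = cros m v := by
          rw [cros_cons]; simp
        rw [hc]
        apply if_congr _ rfl rfl
        rw [good_cons, subset_dots_cons Mark.blank v hT1']
        simp [hcond.1, hcond.2]
      · rw [if_neg hcond]
        apply Finset.sum_eq_zero
        intro v _
        rw [if_neg]
        rintro ⟨hg, hs⟩
        rw [good_cons] at hg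
        rw [subset_dots_cons Mark.blank v hT1'] at hs
        apply hcond
        constructor
        · cases hb2 : b
          · rfl
          · exact absurd (hg.2.1 hb2) (by simp)
        · intro h1
          exact absurd (hs.1 h1) (by simp)
    have hzero : 2 ∈ T → Ssum false m (shiftT T) = 0 := by
      intro h2
      rw [Ssum]
      apply Finset.sum_eq_zero
      intro w hw
      rw [Finset.mem_filter] at hw
      obtain ⟨-, hg, hs⟩ := hw
      have h1d : (1 : ℕ) ∈ dots m w := hs (h1shift.2 h2)
      rw [mem_dots] at h1d
      rcases hg.1 1 h1d with ⟨h, _⟩ | ⟨_, h⟩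
      · omega
      · exact absurd h (by simp)
    -- split the sum
    rw [Ssum, Finset.sum_filter, sum_cons_split, sum_mark]
    rw [hdot, hcross, hblank]
    by_cases h1 : 1 ∈ T
    · have hb : b = true := by
        cases hbc : b
        · subst hbc
          have h := Finset.mem_Icc.1 (hT1 h1)
          simp at h
        · rfl
      have h2 : 2 ∉ T := by simpa using hT2 1 h1
      have hsub2 : shiftT T ⊆ Finset.Icc (if false then 1 else 2) m := by
        intro x hx
        rw [mem_shiftT hTel1] at hx
        have := hTel _ hx.2
        have hx2 : x ≠ 1 := by rintro rfl; exact h2 hx.2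
        rw [Finset.mem_Icc]
        simp only [if_neg Bool.false_ne_true]
        constructor <;> omega
      have hcard : (shiftT T).card = T.card - 1 := by
        rw [card_shiftT hTel1, Finset.card_erase_of_mem h1]
      have hbound : 2 * (T.card - 1) ≤ m := by
        have hsubE : T.erase 1 ⊆ Finset.Icc 3 (m + 1) := by
          intro y hy
          rw [Finset.mem_erase] at hy
          have := hTel y hy.2
          have hy2 : y ≠ 2 := by rintro rfl; exact h2 hy.2
          rw [Finset.mem_Icc]
          constructor <;> omega
        have := stable_card_bound hsubE (noTwoConsec_erase hT2 1)
        rw [Finset.card_erase_of_mem h1] at this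
        omega
      have hl1 : 1 ≤ T.card := Finset.card_pos.2 ⟨1, h1⟩
      rw [if_pos hb, if_pos h1, if_neg (show ¬(b = false ∧ 1 ∉ T) by simp [hb]),
        if_pos h1]
      rw [ih false (shiftT T) hsub2 hstab', if_neg (by rw [h1shift]; exact h2), hcard]
      have he : m - 2 * (T.card - 1) = m + 1 + 1 - 2 * T.card := by omega
      rw [he, add_zero, add_zero]
    · by_cases h2 : 2 ∈ T
      · have hl1 : 1 ≤ T.card := Finset.card_pos.2 ⟨2, h2⟩
        have hcard : (shiftT T).card = T.card := by
          rw [card_shiftT hTel1, Finset.erase_eq_of_notMem h1]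
        rw [hzero h2, ite_self, ite_self, if_neg h1, if_neg h1]
        rw [ih true (shiftT T) hsub1 hstab', if_pos (h1shift.2 h2), hcard]
        have hls : T.card - 1 + 1 = T.card := by omega
        rw [zero_add, add_zero, ← mul_assoc, ← pow_succ', hls]
      · have hsub2 : shiftT T ⊆ Finset.Icc (if false then 1 else 2) m := by
          intro x hx
          rw [mem_shiftT hTel1] at hx
          have := hTel _ hx.2
          have hx2 : x ≠ 1 := by rintro rfl; exact h2 hx.2
          rw [Finset.mem_Icc]
          simp only [if_neg Bool.false_ne_true]
          constructor <;> omega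
        have hcard : (shiftT T).card = T.card := by
          rw [card_shiftT hTel1, Finset.erase_eq_of_notMem h1]
        have hbound : 2 * T.card ≤ m := by
          have hsubE : T ⊆ Finset.Icc 3 (m + 1) := by
            intro y hy
            have := hTel y hy
            have hy1 : y ≠ 1 := by rintro rfl; exact h1 hy
            have hy2 : y ≠ 2 := by rintro rfl; exact h2 hy
            rw [Finset.mem_Icc]
            constructor <;> omega
          have := stable_card_bound hsubE hT2
          omega
        have hns : 1 ∉ shiftT T := by rw [h1shift]; exact h2
        rw [ih false (shiftT T) hsub2 hstab', ih true (shiftT T) hsub1 hstab']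
        rw [if_neg hns, if_neg h1, if_neg h1, hcard]
        have he : m + 1 - 2 * T.card = (m - 2 * T.card) + 1 := by omega
        rw [he, pow_succ]
        cases b
        · rw [if_neg (Bool.false_ne_true), if_pos (show false = false ∧ 1 ∉ T from ⟨rfl, h1⟩)]
          ring
        · rw [if_pos (show true = true from rfl), if_neg (show ¬(true = false ∧ 1 ∉ T) by simp)]
          ring

lemma cro_eq_cros (n : ℕ) (w : Fin (n - 1) → Mark) : cro n w = cros (n - 1) w := by
  rw [cro, Finset.card_filter, cros]
  rw [← Finset.Ico_add_one_right_eq_Icc, Finset.sum_Ico_eq_sum_range]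
  norm_num
  congr 1
  ext x
  simp [add_comm]

lemma isW_iff (n : ℕ) (hn : 2 ≤ n) (w : Fin (n - 1) → Mark) :
    IsW n w ↔ Good false (n - 1) w := by
  constructor
  · rintro ⟨h1, h2⟩
    refine ⟨fun i hi => Or.inl (h1 i hi), fun hb => by simp at hb,
      fun j hj1 hj2 hc => h2 j (by omega) hc⟩
  · rintro ⟨h1, h2, h3⟩
    constructor
    · intro i hi
      rcases h1 i hi with h | ⟨_, hb⟩
      · exact h
      · simp at hb
    · intro j hj hc
      have hr := letterAt_in_range w j (by rw [hc]; simp)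
      exact h3 j hr.1 (by omega) hc

open scoped Classical in
/-- For `n ≥ 2` and `T ⊆ [2, n-1]` with no two consecutive integers:
`∑_{w ∈ W_n, Dot(w) ⊇ T} t^{cro(w)} = t^{|T|} (1+t)^{n-1-2|T|}`. -/
theorem W_genfun_superset (n : ℕ) (hn : 2 ≤ n) (T : Finset ℕ)
    (hT1 : T ⊆ Finset.Icc 2 (n - 1)) (hT2 : NoTwoConsec T) :
    ∑ w ∈ Finset.univ.filter (fun w : Fin (n - 1) → Mark => IsW n w ∧ T ⊆ DotSet n w),
      (X : Polynomial ℤ) ^ cro n w =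
      X ^ T.card * (1 + X) ^ (n - 1 - 2 * T.card) := by
  have h1T : 1 ∉ T := fun h => by
    have := Finset.mem_Icc.1 (hT1 h); omega
  have key := Ssum_eq (n - 1) false T hT1 hT2
  rw [if_neg h1T] at key
  rw [← key]
  unfold Ssum
  rw [Finset.sum_filter, Finset.sum_filter]
  apply Finset.sum_congr rfl
  intro w _
  rw [cro_eq_cros n w]
  apply if_congr _ rfl rfl
  exact and_congr (isW_iff n hn w) Iff.rfl
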